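/- Under the same optimization as in the previous statement (maximize ∑ r_i subject to the two cumulative energy causality constraints), if the optimal solution satisfies r*_k < r*_{k+1} for some k, then at j = k at least one of the two constraints holds with equality: either ∑_{i=1}^k g⁻¹(r*_i) = ∑_{i=1}^k E_i or ∑_{i=1}^k φ(r*_i) = ∑_{i=1}^k (Ē_i + α H_i). -/

import Mathlib

open Finset

private lemma sum_comp_upd1 {N : ℕ} (s : Finset (Fin N)) (f : Fin N → ℝ)
    (k : Fin N) (hk : k ∈ s) (a : ℝ) (g : ℝ → ℝ) :
    ∑ i ∈ s, g (Function.update f k a i)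
      = ∑ i ∈ s, g (f i) + (g a - g (f k)) := by
  have h1 : ∑ i ∈ s, g (Function.update f k a i)
      = ∑ i ∈ s, Function.update (g ∘ f) k (g a) i := by
    refine Finset.sum_congr rfl fun i _ => ?_
    exact congrFun (Function.comp_update g f k a) i
  rw [h1, Finset.sum_update_of_mem hk]
  have h3 : ∑ i ∈ s, g (f i) = ∑ i ∈ s \ {k}, g (f i) + g (f k) :=
    Finset.sum_eq_sum_sdiff_singleton_add hk _
  have h4 : ∑ i ∈ s \ {k}, (g ∘ f) i = ∑ i ∈ s \ {k}, g (f i) := rfl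
  rw [h4]; linarith

private lemma sum_comp_upd2 {N : ℕ} (s : Finset (Fin N)) (f : Fin N → ℝ)
    (k k' : Fin N) (hk : k ∈ s) (hk' : k' ∈ s) (hne : k ≠ k') (a b : ℝ) (g : ℝ → ℝ) :
    ∑ i ∈ s, g (Function.update (Function.update f k a) k' b i)
      = ∑ i ∈ s, g (f i) + (g a - g (f k)) + (g b - g (f k')) := by
  have h1 : ∑ i ∈ s, g (Function.update (Function.update f k a) k' b i)
      = ∑ i ∈ s, Function.update (Function.update (g ∘ f) k (g a)) k' (g b) i := by
    refine Finset.sum_congr rfl fun i _ => ?_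
    have : g ∘ (Function.update (Function.update f k a) k' b)
        = Function.update (Function.update (g ∘ f) k (g a)) k' (g b) := by
      rw [Function.comp_update, Function.comp_update]
    exact congrFun this i
  rw [h1, Finset.sum_update_of_mem hk']
  have hk2 : k ∈ s \ {k'} := by simp [Finset.mem_sdiff, hk, hne]
  rw [Finset.sum_update_of_mem hk2]
  have h3 : ∑ i ∈ s, g (f i) = ∑ i ∈ s \ {k'}, g (f i) + g (f k') :=
    Finset.sum_eq_sum_sdiff_singleton_add hk' _
  have h4 : ∑ i ∈ s \ {k'}, g (f i) = ∑ i ∈ (s \ {k'}) \ {k}, g (f i) + g (f k) :=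
    Finset.sum_eq_sum_sdiff_singleton_add hk2 _
  have h5 : ∑ i ∈ (s \ {k'}) \ {k}, (g ∘ f) i = ∑ i ∈ (s \ {k'}) \ {k}, g (f i) := rfl
  rw [h5]; linarith

/-- Lemma 3: if the optimal rate strictly increases from slot `k` to `k+1`,
then at `j = k` at least one of the two cumulative constraints is tight. -/
theorem stmt_3 (N : ℕ) (hN : 0 < N)
    (E Ebar H : Fin N → ℝ)
    (hE : ∀ i, 0 ≤ E i) (hEbar : ∀ i, 0 ≤ Ebar i) (hH : ∀ i, 0 ≤ H i)
    (α : ℝ) (hα0 : 0 ≤ α) (hα1 : α ≤ 1)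
    (ginv φ : ℝ → ℝ)
    (hgconv : StrictConvexOn ℝ (Set.Ici 0) ginv)
    (hgmono : StrictMonoOn ginv (Set.Ici 0))
    (hφconv : StrictConvexOn ℝ (Set.Ici 0) φ)
    (hφmono : StrictMonoOn φ (Set.Ici 0))
    (r : Fin N → ℝ)
    (hfeas : (∀ i, 0 ≤ r i) ∧
      (∀ j : Fin N, ∑ i ∈ Iic j, ginv (r i) ≤ ∑ i ∈ Iic j, E i) ∧
      (∀ j : Fin N, ∑ i ∈ Iic j, φ (r i) ≤ ∑ i ∈ Iic j, (Ebar i + α * H i)))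
    (hopt : ∀ r' : Fin N → ℝ,
      ((∀ i, 0 ≤ r' i) ∧
        (∀ j : Fin N, ∑ i ∈ Iic j, ginv (r' i) ≤ ∑ i ∈ Iic j, E i) ∧
        (∀ j : Fin N, ∑ i ∈ Iic j, φ (r' i) ≤
          ∑ i ∈ Iic j, (Ebar i + α * H i))) →
      ∑ i, r' i ≤ ∑ i, r i)
    (k k' : Fin N) (hkk' : (k : ℕ) + 1 = (k' : ℕ)) (hlt : r k < r k') :
    (∑ i ∈ Iic k, ginv (r i) = ∑ i ∈ Iic k, E i) ∨
    (∑ i ∈ Iic k, φ (r i) = ∑ i ∈ Iic k, (Ebar i + α * H i)) := by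
  by_contra hcon
  push_neg at hcon
  obtain ⟨hne1, hne2⟩ := hcon
  obtain ⟨hr0, hc1, hc2⟩ := hfeas
  obtain ⟨s₁, hs₁⟩ : ∃ x : ℝ, x = ∑ i ∈ Iic k, E i - ∑ i ∈ Iic k, ginv (r i) := ⟨_, rfl⟩
  obtain ⟨s₂, hs₂⟩ : ∃ x : ℝ, x = ∑ i ∈ Iic k, (Ebar i + α * H i) - ∑ i ∈ Iic k, φ (r i) := ⟨_, rfl⟩
  have hs₁pos : 0 < s₁ := by rw [hs₁]; exact sub_pos.2 (lt_of_le_of_ne (hc1 k) hne1)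
  have hs₂pos : 0 < s₂ := by rw [hs₂]; exact sub_pos.2 (lt_of_le_of_ne (hc2 k) hne2)
  have hkk'lt : k < k' := by rw [Fin.lt_def]; omega
  have hkne : k ≠ k' := ne_of_lt hkk'lt
  have hx0 : (0:ℝ) ≤ r k := hr0 k
  have hy0 : (0:ℝ) ≤ r k' := hr0 k'
  have hxIci : r k ∈ Set.Ici (0:ℝ) := hx0
  have hyIci : r k' ∈ Set.Ici (0:ℝ) := hy0
  have hxyne : r k ≠ r k' := ne_of_lt hlt
  have hC₁ : 0 < ginv (r k') - ginv (r k) := sub_pos.2 (hgmono hxIci hyIci hlt)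
  have hC₂ : 0 < φ (r k') - φ (r k) := sub_pos.2 (hφmono hxIci hyIci hlt)
  obtain ⟨θ, hθdef⟩ : ∃ x : ℝ, x = min (1/2 : ℝ)
      (min (s₁ / (ginv (r k') - ginv (r k))) (s₂ / (φ (r k') - φ (r k)))) := ⟨_, rfl⟩
  have hθpos : 0 < θ := by
    rw [hθdef]
    exact lt_min (by norm_num) (lt_min (div_pos hs₁pos hC₁) (div_pos hs₂pos hC₂))
  have hθhalf : θ ≤ 1/2 := by rw [hθdef]; exact min_le_left _ _
  have hθC₁ : θ * (ginv (r k') - ginv (r k)) ≤ s₁ := by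
    refine (le_div_iff₀ hC₁).1 ?_
    rw [hθdef]; exact le_trans (min_le_right _ _) (min_le_left _ _)
  have hθC₂ : θ * (φ (r k') - φ (r k)) ≤ s₂ := by
    refine (le_div_iff₀ hC₂).1 ?_
    rw [hθdef]; exact le_trans (min_le_right _ _) (min_le_right _ _)
  obtain ⟨a, ha⟩ : ∃ x : ℝ, x = (1 - θ) * r k + θ * r k' := ⟨_, rfl⟩
  obtain ⟨b, hb⟩ : ∃ x : ℝ, x = θ * r k + (1 - θ) * r k' := ⟨_, rfl⟩
  have h1θ : (0:ℝ) < 1 - θ := by linarith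
  have ha0 : (0:ℝ) ≤ a := by
    have h1 := mul_nonneg h1θ.le hx0
    have h2 := mul_nonneg hθpos.le hy0
    linarith
  have hb0 : (0:ℝ) ≤ b := by
    have h1 := mul_nonneg hθpos.le hx0
    have h2 := mul_nonneg h1θ.le hy0
    linarith
  have hga : ginv a < (1 - θ) * ginv (r k) + θ * ginv (r k') := by
    have := hgconv.2 hxIci hyIci hxyne h1θ hθpos (by ring)
    simpa [smul_eq_mul, ha] using this
  have hgb : ginv b < θ * ginv (r k) + (1 - θ) * ginv (r k') := by
    have := hgconv.2 hxIci hyIci hxyne hθpos h1θ (by ring)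
    simpa [smul_eq_mul, hb] using this
  have hφa : φ a < (1 - θ) * φ (r k) + θ * φ (r k') := by
    have := hφconv.2 hxIci hyIci hxyne h1θ hθpos (by ring)
    simpa [smul_eq_mul, ha] using this
  have hφb : φ b < θ * φ (r k) + (1 - θ) * φ (r k') := by
    have := hφconv.2 hxIci hyIci hxyne hθpos h1θ (by ring)
    simpa [smul_eq_mul, hb] using this
  obtain ⟨Δ₁, hΔ₁⟩ : ∃ x : ℝ, x = ginv (r k) + ginv (r k') - ginv a - ginv b := ⟨_, rfl⟩
  obtain ⟨Δ₂, hΔ₂⟩ : ∃ x : ℝ, x = φ (r k) + φ (r k') - φ a - φ b := ⟨_, rfl⟩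
  have hΔ₁pos : 0 < Δ₁ := by rw [hΔ₁]; nlinarith [hga, hgb]
  have hΔ₂pos : 0 < Δ₂ := by rw [hΔ₂]; nlinarith [hφa, hφb]
  obtain ⟨D₁, hD₁⟩ : ∃ x : ℝ, x = ginv (b + 1) - ginv b := ⟨_, rfl⟩
  obtain ⟨D₂, hD₂⟩ : ∃ x : ℝ, x = φ (b + 1) - φ b := ⟨_, rfl⟩
  have hbIci : b ∈ Set.Ici (0:ℝ) := hb0
  have hb1Ici : b + 1 ∈ Set.Ici (0:ℝ) := by simp only [Set.mem_Ici]; linarith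
  have hD₁pos : 0 < D₁ := by rw [hD₁]; exact sub_pos.2 (hgmono hbIci hb1Ici (by linarith))
  have hD₂pos : 0 < D₂ := by rw [hD₂]; exact sub_pos.2 (hφmono hbIci hb1Ici (by linarith))
  obtain ⟨t, htdef⟩ : ∃ x : ℝ, x = min (1/2 : ℝ) (min (Δ₁ / D₁) (Δ₂ / D₂)) := ⟨_, rfl⟩
  have htpos : 0 < t := by
    rw [htdef]
    exact lt_min (by norm_num) (lt_min (div_pos hΔ₁pos hD₁pos) (div_pos hΔ₂pos hD₂pos))
  have ht1 : t ≤ 1/2 := by rw [htdef]; exact min_le_left _ _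
  have htD₁ : t * D₁ ≤ Δ₁ := by
    refine (le_div_iff₀ hD₁pos).1 ?_
    rw [htdef]; exact le_trans (min_le_right _ _) (min_le_left _ _)
  have htD₂ : t * D₂ ≤ Δ₂ := by
    refine (le_div_iff₀ hD₂pos).1 ?_
    rw [htdef]; exact le_trans (min_le_right _ _) (min_le_right _ _)
  have hgbt : ginv (b + t) ≤ ginv b + t * D₁ := by
    have h := hgconv.convexOn.2 hbIci hb1Ici (by linarith : (0:ℝ) ≤ 1 - t)
      htpos.le (by ring)
    have he : (1 - t) • b + t • (b + 1) = b + t := by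
      rw [smul_eq_mul, smul_eq_mul]; ring
    rw [he, smul_eq_mul, smul_eq_mul] at h
    have : (1 - t) * ginv b + t * ginv (b + 1) = ginv b + t * D₁ := by
      rw [hD₁]; ring
    linarith
  have hφbt : φ (b + t) ≤ φ b + t * D₂ := by
    have h := hφconv.convexOn.2 hbIci hb1Ici (by linarith : (0:ℝ) ≤ 1 - t)
      htpos.le (by ring)
    have he : (1 - t) • b + t • (b + 1) = b + t := by
      rw [smul_eq_mul, smul_eq_mul]; ring
    rw [he, smul_eq_mul, smul_eq_mul] at h
    have : (1 - t) * φ b + t * φ (b + 1) = φ b + t * D₂ := by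
      rw [hD₂]; ring
    linarith
  obtain ⟨r', hr'⟩ : ∃ x : Fin N → ℝ, x = Function.update (Function.update r k a) k' (b + t) := ⟨_, rfl⟩
  -- sum computations, generic in g
  have key : ∀ g : ℝ → ℝ, ∀ j : Fin N,
      ((j:ℕ) < (k:ℕ) → ∑ i ∈ Iic j, g (r' i) = ∑ i ∈ Iic j, g (r i)) ∧
      ((j:ℕ) = (k:ℕ) → ∑ i ∈ Iic j, g (r' i)
          = ∑ i ∈ Iic j, g (r i) + (g a - g (r k))) ∧
      ((k':ℕ) ≤ (j:ℕ) → ∑ i ∈ Iic j, g (r' i)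
          = ∑ i ∈ Iic j, g (r i) + (g a - g (r k)) + (g (b + t) - g (r k'))) := by
    intro g j
    refine ⟨?_, ?_, ?_⟩
    · intro hj
      refine Finset.sum_congr rfl fun i hi => ?_
      rw [Finset.mem_Iic, Fin.le_def] at hi
      have hik : i ≠ k := by intro h; subst h; omega
      have hik' : i ≠ k' := by intro h; subst h; omega
      rw [hr', Function.update_of_ne hik', Function.update_of_ne hik]
    · intro hj
      have h1 : ∑ i ∈ Iic j, g (r' i) = ∑ i ∈ Iic j, g (Function.update r k a i) := by
        refine Finset.sum_congr rfl fun i hi => ?_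
        rw [Finset.mem_Iic, Fin.le_def] at hi
        have hik' : i ≠ k' := by intro h; subst h; omega
        rw [hr', Function.update_of_ne hik']
      rw [h1, sum_comp_upd1 _ _ _ (by rw [Finset.mem_Iic, Fin.le_def]; omega) _ _]
    · intro hj
      rw [hr']
      have hk1 : k ∈ Iic j := by rw [Finset.mem_Iic, Fin.le_def]; omega
      have hk2 : k' ∈ Iic j := by rw [Finset.mem_Iic, Fin.le_def]; omega
      exact sum_comp_upd2 _ _ _ _ hk1 hk2 hkne _ _ _
  -- bound ginv a - ginv (r k) and φ a - φ (r k)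
  have hgas : ginv a - ginv (r k) ≤ s₁ := by
    have hring : (1 - θ) * ginv (r k) + θ * ginv (r k')
        = ginv (r k) + θ * (ginv (r k') - ginv (r k)) := by ring
    linarith [hga]
  have hφas : φ a - φ (r k) ≤ s₂ := by
    have hring : (1 - θ) * φ (r k) + θ * φ (r k')
        = φ (r k) + θ * (φ (r k') - φ (r k)) := by ring
    linarith [hφa]
  -- combined bound for j ≥ k'
  have hgneg : (ginv a - ginv (r k)) + (ginv (b + t) - ginv (r k')) ≤ 0 := by
    have := hΔ₁
    linarith [hgbt, htD₁]
  have hφneg : (φ a - φ (r k)) + (φ (b + t) - φ (r k')) ≤ 0 := by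
    have := hΔ₂
    linarith [hφbt, htD₂]
  -- feasibility of r'
  have hr'0 : ∀ i, 0 ≤ r' i := by
    intro i
    rcases eq_or_ne i k' with h | h
    · rw [hr', h, Function.update_self]; linarith
    · rw [hr', Function.update_of_ne h]
      rcases eq_or_ne i k with h2 | h2
      · rw [h2, Function.update_self]; exact ha0
      · rw [Function.update_of_ne h2]; exact hr0 i
  have hr'c1 : ∀ j : Fin N, ∑ i ∈ Iic j, ginv (r' i) ≤ ∑ i ∈ Iic j, E i := by
    intro j
    obtain ⟨K0, K1, K2⟩ := key ginv j
    rcases lt_trichotomy ((j:ℕ)) ((k:ℕ)) with hj | hj | hj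
    · rw [K0 hj]; exact hc1 j
    · have hjk : j = k := Fin.ext hj
      rw [K1 hj, hjk]
      linarith [hgas]
    · rw [K2 (by omega)]
      linarith [hc1 j, hgneg]
  have hr'c2 : ∀ j : Fin N, ∑ i ∈ Iic j, φ (r' i) ≤ ∑ i ∈ Iic j, (Ebar i + α * H i) := by
    intro j
    obtain ⟨K0, K1, K2⟩ := key φ j
    rcases lt_trichotomy ((j:ℕ)) ((k:ℕ)) with hj | hj | hj
    · rw [K0 hj]; exact hc2 j
    · have hjk : j = k := Fin.ext hj
      rw [K1 hj, hjk]
      linarith [hφas]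
    · rw [K2 (by omega)]
      linarith [hc2 j, hφneg]
  -- objective strictly improves
  have hsum : ∑ i, r' i = ∑ i, r i + t := by
    have h := sum_comp_upd2 Finset.univ r k k' (Finset.mem_univ k) (Finset.mem_univ k')
      hkne a (b + t) id
    simp only [id_eq] at h
    rw [hr', h]
    have hab : a + b = r k + r k' := by rw [ha, hb]; ring
    linarith
  have hle := hopt r' ⟨hr'0, hr'c1, hr'c2⟩
  rw [hsum] at hle
  linarith
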